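/- The three binary qubit observables X_t(±) = ½(1 ± tσ_x), Y_t(±) = ½(1 ± tσ_y), Z_t(±) = ½(1 ± tσ_z) are incompatible (admit no joint POVM) whenever t > 1/√3. -/

import Mathlib

open scoped BigOperators ComplexOrder
open Matrix Finset

abbrev Mat (d : ℕ) := Matrix (Fin d) (Fin d) ℂ

/-- A POVM with finite outcome set `Ω`. -/
def IsPOVM {d : ℕ} {Ω : Type} [Fintype Ω] (A : Ω → Mat d) : Prop :=
  (∀ a, (A a).PosSemidef) ∧ ∑ a, A a = 1

/-- `G` is a joint observable for the family `A` of POVMs. -/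
def IsJoint {d n : ℕ} {Ω : Fin n → Type} [∀ i, Fintype (Ω i)] [∀ i, DecidableEq (Ω i)]
    (A : ∀ i, Ω i → Mat d) (G : (∀ i, Ω i) → Mat d) : Prop :=
  IsPOVM G ∧ ∀ (i : Fin n) (a : Ω i), ∑ g ∈ univ.filter (fun g => g i = a), G g = A i a

/-- The POVMs `A i` are compatible (jointly measurable). -/
def Compatible {d n : ℕ} {Ω : Fin n → Type} [∀ i, Fintype (Ω i)] [∀ i, DecidableEq (Ω i)]
    (A : ∀ i, Ω i → Mat d) : Prop :=
  ∃ G, IsJoint A G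

noncomputable def sigmaX : Mat 2 := !![0, 1; 1, 0]
noncomputable def sigmaY : Mat 2 := !![0, -Complex.I; Complex.I, 0]
noncomputable def sigmaZ : Mat 2 := !![1, 0; 0, -1]

/-- The noisy binary spin observable `½(1 ± tσ)` (outcome `true` is `+`). -/
noncomputable def noisySpin (t : ℝ) (σ : Mat 2) (ε : Bool) : Mat 2 :=
  (1 / 2 : ℂ) • ((1 : Mat 2) + (if ε then (t : ℂ) else -(t : ℂ)) • σ)

/- ### Auxiliary material -/

lemma trace_psd_nonneg {d : ℕ} {A : Mat d} (hA : A.PosSemidef) : 0 ≤ A.trace := by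
  rw [Matrix.trace]
  apply Finset.sum_nonneg
  intro i _
  exact hA.diag_nonneg

lemma trace_mul_psd_nonneg {d : ℕ} {A B : Mat d} (hA : A.PosSemidef) (hB : B.PosSemidef) :
    0 ≤ (A * B).trace := by
  obtain ⟨C, rfl⟩ : ∃ C : Mat d, B = Cᴴ * C := by
    open scoped MatrixOrder in
    exact ⟨CFC.sqrt B, by rw [(CFC.sqrt_nonneg B).posSemidef.1.eq, CFC.sqrt_mul_sqrt_self B hB.nonneg]⟩
  rw [← Matrix.mul_assoc, Matrix.trace_mul_cycle]
  exact trace_psd_nonneg (hA.mul_mul_conjTranspose_same C)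

noncomputable def pauli : Fin 3 → Mat 2 := ![sigmaX, sigmaY, sigmaZ]

def sgn (b : Bool) : ℂ := if b then 1 else -1

lemma conj_sgn (b : Bool) : (starRingEnd ℂ) (sgn b) = sgn b := by cases b <;> simp [sgn]

/-- The matrix `ε·σ` for a sign vector `ε`. -/
noncomputable def Sg (g : Fin 3 → Bool) : Mat 2 := ∑ i, sgn (g i) • pauli i

lemma Sg_eq (g : Fin 3 → Bool) :
    Sg g = !![sgn (g 2), sgn (g 0) - Complex.I * sgn (g 1);
              sgn (g 0) + Complex.I * sgn (g 1), -sgn (g 2)] := by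
  rw [Sg, Fin.sum_univ_three]
  ext i j
  fin_cases i <;> fin_cases j <;>
    simp [pauli, sigmaX, sigmaY, sigmaZ] <;> ring

lemma pauli_sq (i : Fin 3) : pauli i * pauli i = 1 := by
  fin_cases i <;>
  · ext a b
    fin_cases a <;> fin_cases b <;>
      simp [pauli, sigmaX, sigmaY, sigmaZ, Matrix.mul_apply, Fin.sum_univ_two,
        Matrix.one_apply, Complex.I_mul_I]

/-- `√3·1 − ε·σ` is positive semidefinite. -/
lemma M_posSemidef (g : Fin 3 → Bool) :
    (((Real.sqrt 3 : ℝ) : ℂ) • (1 : Mat 2) - Sg g).PosSemidef := by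
  set r : ℂ := ((Real.sqrt 3 : ℝ) : ℂ) with hr
  set M : Mat 2 := r • (1 : Mat 2) - Sg g with hM
  clear_value r M
  have h3 : r * r = 3 := by
    have : Real.sqrt 3 * Real.sqrt 3 = 3 := Real.mul_self_sqrt (by norm_num)
    rw [hr, ← Complex.ofReal_mul, this]
    norm_num
  have hherm : Mᴴ = M := by
    rw [hM, Sg_eq]
    ext i j
    fin_cases i <;> fin_cases j <;>
      simp [Matrix.conjTranspose_apply, Matrix.one_apply, conj_sgn, hr, Complex.conj_ofReal] <;>
      ring
  have hsq : M * M = (2 * r) • M := by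
    rw [hM, Sg_eq]
    ext i j
    cases hg0 : g 0 <;> cases hg1 : g 1 <;> cases hg2 : g 2 <;>
      fin_cases i <;> fin_cases j <;>
      · simp only [hg0, hg1, hg2, sgn, if_true, if_false, Bool.false_eq_true,
          Matrix.mul_apply, Fin.sum_univ_two, Matrix.smul_apply, Matrix.sub_apply,
          Matrix.one_apply, Matrix.cons_val', Matrix.cons_val_zero, Matrix.cons_val_one,
          Matrix.head_cons, Matrix.head_fin_const, Matrix.of_apply, smul_eq_mul,
          Matrix.empty_val', Matrix.cons_val_fin_one, ne_eq, ite_true, ite_false,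
          Fin.zero_eta, Fin.mk_one, one_ne_zero, zero_ne_one, reduceCtorEq]
        first
        | ring1
        | linear_combination h3 - Complex.I_mul_I
        | linear_combination h3 + Complex.I_mul_I
        | linear_combination -h3 - Complex.I_mul_I
  -- `M = (c • M)ᴴ * (c • M)` with `c = (2√3)^{-1/2}`
  have hrpos : (0:ℝ) < 2 * Real.sqrt 3 := by positivity
  set c : ℝ := (Real.sqrt (2 * Real.sqrt 3))⁻¹ with hc
  have hcc : c * c * (2 * Real.sqrt 3) = 1 := by
    rw [hc, ← mul_inv, Real.mul_self_sqrt hrpos.le]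
    exact inv_mul_cancel₀ hrpos.ne'
  have hc2 : (c:ℂ) * (c:ℂ) * (2 * r) = 1 := by
    calc (c:ℂ) * (c:ℂ) * (2 * r) = ((c * c * (2 * Real.sqrt 3) : ℝ) : ℂ) := by
          rw [hr]; push_cast; ring
    _ = 1 := by rw [hcc]; norm_num
  have key : M = ((c:ℂ) • M)ᴴ * ((c:ℂ) • M) := by
    rw [Matrix.conjTranspose_smul, hherm, Matrix.smul_mul, Matrix.mul_smul, hsq,
      smul_smul, smul_smul]
    simp only [Complex.star_def, Complex.conj_ofReal]
    rw [hc2, one_smul]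
  rw [key]
  exact Matrix.posSemidef_conjTranspose_mul_self _

/-- The three noisy orthogonal qubit spin observables
`½(1 ± tσ_x), ½(1 ± tσ_y), ½(1 ± tσ_z)` are incompatible whenever `t > 1/√3`. -/
theorem noisy_orthogonal_triple_incompatible (t : ℝ) (ht1 : t ≤ 1)
    (ht : 1 / Real.sqrt 3 < t) :
    ¬ Compatible (n := 3) (Ω := fun _ => Bool)
      (fun i => noisySpin t (![sigmaX, sigmaY, sigmaZ] i)) := by
  rintro ⟨G, ⟨hGpsd, hGsum⟩, hmarg⟩
  -- signed marginals
  have key : ∀ i : Fin 3, ∑ g : Fin 3 → Bool, sgn (g i) • G g = (t : ℂ) • pauli i := by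
    intro i
    have h1 := hmarg i true
    have h2 := hmarg i false
    rw [← Finset.sum_filter_add_sum_filter_not univ (fun g => g i = true)]
    have e1 : ∑ g ∈ univ.filter (fun g => g i = true), sgn (g i) • G g
        = ∑ g ∈ univ.filter (fun g => g i = true), G g := by
      apply Finset.sum_congr rfl; intro g hg
      simp only [Finset.mem_filter] at hg
      rw [hg.2]; simp [sgn]
    have e2 : ∑ g ∈ univ.filter (fun g => ¬ g i = true), sgn (g i) • G g
        = -∑ g ∈ univ.filter (fun g => g i = false), G g := by
      rw [← Finset.sum_neg_distrib]
      apply Finset.sum_congr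
      · apply Finset.filter_congr; intro g _; simp
      · intro g hg
        simp only [Finset.mem_filter, Bool.not_eq_true] at hg
        rw [hg.2]; simp [sgn]
    rw [e1, e2, h1, h2]
    show noisySpin t (pauli i) true - noisySpin t (pauli i) false = _
    rw [noisySpin, noisySpin]
    norm_num
    module
  -- main operator identity
  have main : ∑ g : Fin 3 → Bool, G g * Sg g = ((3 * t : ℝ) : ℂ) • 1 := by
    have e : ∑ g : Fin 3 → Bool, G g * Sg g
        = ∑ i : Fin 3, (∑ g : Fin 3 → Bool, sgn (g i) • G g) * pauli i := by
      simp_rw [Sg, Finset.mul_sum, Matrix.sum_mul, Matrix.mul_smul, Matrix.smul_mul]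
      rw [Finset.sum_comm]
    rw [e]
    have e2 : ∀ i : Fin 3, ((t:ℂ) • pauli i) * pauli i = (t:ℂ) • (1 : Mat 2) := by
      intro i; rw [Matrix.smul_mul, pauli_sq]
    simp_rw [key, e2, Finset.sum_const, Finset.card_univ, Fintype.card_fin]
    rw [← Nat.cast_smul_eq_nsmul ℂ, smul_smul]
    push_cast
    ring_nf
  -- trace bound per outcome
  have hbound : ∀ g : Fin 3 → Bool,
      (G g * Sg g).trace ≤ ((Real.sqrt 3 : ℝ) : ℂ) * (G g).trace := by
    intro g
    have hpos := trace_mul_psd_nonneg (hGpsd g) (M_posSemidef g)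
    have expand : G g * (((Real.sqrt 3 : ℝ) : ℂ) • (1 : Mat 2) - Sg g)
        = ((Real.sqrt 3 : ℝ) : ℂ) • G g - G g * Sg g := by
      rw [Matrix.mul_sub, Matrix.mul_smul, Matrix.mul_one]
    rw [expand, Matrix.trace_sub, Matrix.trace_smul, smul_eq_mul] at hpos
    exact sub_nonneg.mp hpos
  -- put it all together
  have t1 : ∑ g : Fin 3 → Bool, (G g * Sg g).trace = ((3 * t : ℝ) : ℂ) * 2 := by
    rw [← Matrix.trace_sum, main, Matrix.trace_smul, Matrix.trace_one, smul_eq_mul]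
    norm_num
  have t2 : ∑ g : Fin 3 → Bool, (G g * Sg g).trace
      ≤ ∑ g : Fin 3 → Bool, ((Real.sqrt 3 : ℝ) : ℂ) * (G g).trace :=
    Finset.sum_le_sum (fun g _ => hbound g)
  have t3 : ∑ g : Fin 3 → Bool, ((Real.sqrt 3 : ℝ) : ℂ) * (G g).trace
      = ((Real.sqrt 3 : ℝ) : ℂ) * 2 := by
    rw [← Finset.mul_sum, ← Matrix.trace_sum, hGsum, Matrix.trace_one]
    norm_num
  rw [t1, t3] at t2
  have t4 : ((6 * t : ℝ) : ℂ) ≤ ((2 * Real.sqrt 3 : ℝ) : ℂ) := by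
    calc ((6 * t : ℝ) : ℂ) = ((3 * t : ℝ) : ℂ) * 2 := by push_cast; ring
    _ ≤ ((Real.sqrt 3 : ℝ) : ℂ) * 2 := t2
    _ = ((2 * Real.sqrt 3 : ℝ) : ℂ) := by push_cast; ring
  rw [Complex.real_le_real] at t4
  have hs3 : Real.sqrt 3 * Real.sqrt 3 = 3 := Real.mul_self_sqrt (by norm_num)
  have hspos : (0:ℝ) < Real.sqrt 3 := Real.sqrt_pos.mpr (by norm_num)
  rw [div_lt_iff₀ hspos] at ht
  nlinarith
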